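/- The resumption construction RA = νγ.T(γ + A) extends to a monad R on C: the unit is out⁻¹ ∘ η_T ∘ inr, and bind is definable by corecursion; the three monad laws hold. -/

import Mathlib

open CategoryTheory CategoryTheory.Limits

universe v u

/-- The resumption construction `RA = νγ.T(γ + A)` extends to a monad `R` on `C`:
the unit is `out⁻¹ ∘ η_T ∘ inr`, and bind is definable by corecursion (it is the
unique morphism satisfying the corecursive equation); the three monad laws hold. -/
theorem resumption_monad {C : Type u} [Category.{v} C] [HasBinaryCoproducts C]
    (T : Monad C) (R : C → C)
    (out : ∀ A : C, R A ⟶ T.obj (R A ⨿ A))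
    -- each `(R A, out A)` is a final coalgebra of `X ↦ T(X + A)`:
    (hfin : ∀ (A X : C) (f : X ⟶ T.obj (X ⨿ A)),
      ∃! h : X ⟶ R A, h ≫ out A = f ≫ T.map (coprod.map h (𝟙 A)))
    -- `out A` is an isomorphism (by Lambek's lemma):
    [∀ A : C, IsIso (out A)] :
    ∃ bind : ∀ A B : C, (A ⟶ R B) → (R A ⟶ R B),
      -- bind is given by corecursion:
      (∀ (A B : C) (f : A ⟶ R B),
        bind A B f ≫ out B =
          out A ≫
            T.map (coprod.desc (bind A B f ≫ coprod.inl ≫ T.η.app (R B ⨿ B))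
              (f ≫ out B)) ≫ T.μ.app (R B ⨿ B)) ∧
      -- with the unit `η_R := out⁻¹ ∘ η_T ∘ inr`, the three monad laws hold:
      (∀ (A B : C) (f : A ⟶ R B),
        (coprod.inr ≫ T.η.app (R A ⨿ A) ≫ inv (out A)) ≫ bind A B f = f) ∧
      (∀ A : C, bind A A (coprod.inr ≫ T.η.app (R A ⨿ A) ≫ inv (out A)) = 𝟙 (R A)) ∧
      (∀ (A B D : C) (f : A ⟶ R B) (g : B ⟶ R D),
        bind A B f ≫ bind B D g = bind A D (f ≫ bind B D g)) := by
  -- naturality helpers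
  have ηn : ∀ (X Y : C) (g : X ⟶ Y), T.η.app X ≫ T.map g = g ≫ T.η.app Y := by
    intro X Y g
    simpa using (T.η.naturality g).symm
  have μn : ∀ (X Y : C) (g : X ⟶ Y),
      T.μ.app X ≫ T.map g = T.map (T.map g) ≫ T.μ.app Y := by
    intro X Y g
    simpa using (T.μ.naturality g).symm
  have ηna : ∀ (X Y Z : C) (g : X ⟶ Y) (w : T.obj Y ⟶ Z),
      T.η.app X ≫ T.map g ≫ w = g ≫ T.η.app Y ≫ w := by
    intro X Y Z g w
    rw [← Category.assoc, ηn, Category.assoc]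
  have μna : ∀ (X Y Z : C) (g : X ⟶ Y) (w : T.obj Y ⟶ Z),
      T.μ.app X ≫ T.map g ≫ w = T.map (T.map g) ≫ T.μ.app Y ≫ w := by
    intro X Y Z g w
    rw [← Category.assoc, μn, Category.assoc]
  -- identity is the unique coalgebra endomorphism of the final coalgebra
  have idu : ∀ (A : C) (k : R A ⟶ R A),
      k ≫ out A = out A ≫ T.map (coprod.map k (𝟙 A)) → k = 𝟙 (R A) := by
    intro A k hk
    obtain ⟨h, hh, hu⟩ := hfin A (R A) (out A)
    rw [hu k hk, hu (𝟙 (R A)) (by simp)]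
  -- the key computation, used for both existence and uniqueness
  have main : ∀ (A B : C) (f : A ⟶ R B) (d : R A ⨿ R B ⟶ R B),
      coprod.inr ≫ d = 𝟙 (R B) →
      (out A ≫ T.map (coprod.desc
          (coprod.inl ≫ coprod.inl ≫ T.η.app ((R A ⨿ R B) ⨿ B))
          (f ≫ out B ≫ T.map (coprod.map coprod.inr (𝟙 B)))) ≫
        T.μ.app ((R A ⨿ R B) ⨿ B)) ≫ T.map (coprod.map d (𝟙 B)) =
      out A ≫ T.map (coprod.desc ((coprod.inl ≫ d) ≫ coprod.inl ≫ T.η.app (R B ⨿ B))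
          (f ≫ out B)) ≫ T.μ.app (R B ⨿ B) := by
    intro A B f d hd
    rw [Category.assoc, Category.assoc, μn, ← CategoryTheory.Functor.map_comp_assoc]
    congr 2
    congr 1
    apply coprod.hom_ext
    · simp only [coprod.inl_desc_assoc, coprod.inl_desc, Category.assoc, ηn, ηna,
        coprod.inl_map_assoc]
    · simp only [coprod.inr_desc_assoc, coprod.inr_desc, Category.assoc,
        ← CategoryTheory.Functor.map_comp, coprod.map_map, hd, Category.comp_id, coprod.map_id_id,
        CategoryTheory.Functor.map_id]
  -- the corecursive equation for `bind f` has a unique solution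
  have key : ∀ (A B : C) (f : A ⟶ R B), ∃! k : R A ⟶ R B,
      k ≫ out B = out A ≫
        T.map (coprod.desc (k ≫ coprod.inl ≫ T.η.app (R B ⨿ B)) (f ≫ out B)) ≫
          T.μ.app (R B ⨿ B) := by
    intro A B f
    obtain ⟨h, hh, hu⟩ := hfin B (R A ⨿ R B)
      (coprod.desc
        (out A ≫ T.map (coprod.desc
            (coprod.inl ≫ coprod.inl ≫ T.η.app ((R A ⨿ R B) ⨿ B))
            (f ≫ out B ≫ T.map (coprod.map coprod.inr (𝟙 B)))) ≫
          T.μ.app ((R A ⨿ R B) ⨿ B))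
        (out B ≫ T.map (coprod.map coprod.inr (𝟙 B))))
    have hinr : coprod.inr ≫ h = 𝟙 (R B) := by
      apply idu
      rw [Category.assoc, hh]
      simp only [coprod.inr_desc_assoc, Category.assoc, ← CategoryTheory.Functor.map_comp,
        coprod.map_map, Category.comp_id]
    refine ⟨coprod.inl ≫ h, ?_, ?_⟩
    · -- existence
      show (coprod.inl ≫ h) ≫ out B = _
      rw [Category.assoc, hh, ← Category.assoc coprod.inl, coprod.inl_desc,
        main A B f h hinr]
    · -- uniqueness
      intro k hk
      have hdesc : coprod.desc k (𝟙 (R B)) = h := by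
        apply hu
        apply coprod.hom_ext
        · rw [coprod.inl_desc_assoc, hk, ← Category.assoc coprod.inl, coprod.inl_desc,
            main A B f (coprod.desc k (𝟙 (R B))) (coprod.inr_desc _ _),
            coprod.inl_desc]
        · simp only [coprod.inr_desc_assoc, coprod.inr_desc, Category.id_comp,
            Category.assoc, ← CategoryTheory.Functor.map_comp, coprod.map_map,
            Category.comp_id, coprod.map_id_id, CategoryTheory.Functor.map_id]
      rw [← hdesc, coprod.inl_desc]
  choose bind hbind hbu using key
  refine ⟨bind, hbind, ?_, ?_, ?_⟩
  · -- left unit law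
    intro A B f
    have h1 : ((coprod.inr ≫ T.η.app (R A ⨿ A) ≫ inv (out A)) ≫ bind A B f) ≫ out B =
        f ≫ out B := by
      rw [Category.assoc, Category.assoc, Category.assoc, hbind A B f,
        IsIso.inv_hom_id_assoc, ηna, coprod.inr_desc_assoc, Category.assoc,
        Monad.left_unit]
      simp
    exact (cancel_mono (out B)).mp h1
  · -- right unit law
    intro A
    refine (hbu A A (coprod.inr ≫ T.η.app (R A ⨿ A) ≫ inv (out A)) (𝟙 (R A)) ?_).symm
    show 𝟙 (R A) ≫ out A = _
    rw [Category.id_comp, Category.id_comp]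
    simp only [Category.assoc, IsIso.inv_hom_id, Category.comp_id]
    have hd : coprod.desc (coprod.inl ≫ T.η.app (R A ⨿ A))
        (coprod.inr ≫ T.η.app (R A ⨿ A)) = T.η.app (R A ⨿ A) := by
      apply coprod.hom_ext <;> first | exact coprod.inl_desc _ _ | exact coprod.inr_desc _ _
    rw [hd, Monad.right_unit]
    simp
  · -- associativity
    intro A B D f g
    refine hbu A D (f ≫ bind B D g) (bind A B f ≫ bind B D g) ?_
    show (bind A B f ≫ bind B D g) ≫ out D = _
    rw [Category.assoc, hbind B D g, reassoc_of% (hbind A B f), μna,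
      ← Monad.assoc, ← CategoryTheory.Functor.map_comp_assoc, ← CategoryTheory.Functor.map_comp_assoc]
    congr 2
    congr 1
    apply coprod.hom_ext
    · simp only [coprod.inl_desc_assoc, coprod.inl_desc, Category.assoc, ηna,
        Monad.left_unit_assoc, Monad.left_unit]
      simp
    · simp only [coprod.inr_desc_assoc, coprod.inr_desc, Category.assoc]
      rw [hbind B D g]
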